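/- arXiv:1906.11945 — 2 statements merged into one kernel-verified Lean document; each statement's English description precedes it below -/
import Mathlib

section
/- For any integer γ ≥ 4 and any integer n ≥ 2, define λ_i = Σ_{ℓ=1}^∞ γ^{-(i-1)β_n(ℓ)} for 2 ≤ i ≤ n, where β_n(ℓ) = (1 - n^ℓ)/(1 - n), and λ_1 = 1. Then Σ_{i=1}^n λ_i < (γ-1)/(γ-2). -/
/-- For integers `γ ≥ 4` and `n ≥ 2`, with `β_n ℓ = 1 + n + ⋯ + n^(ℓ-1)`,
`λ_1 = 1`, and `λ_i = ∑_{ℓ=1}^∞ γ^{-(i-1) β_n ℓ}` for `2 ≤ i ≤ n`,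
one has `∑_{i=1}^n λ_i < (γ-1)/(γ-2)`. -/
theorem sprecher_lambda_sum_lt (n γ : ℕ) (hn : 2 ≤ n) (hγ : 4 ≤ γ)
    (β : ℕ → ℕ) (hβ : ∀ ℓ, β ℓ = ∑ k ∈ Finset.range ℓ, n ^ k)
    (lam : ℕ → ℝ) (hlam1 : lam 1 = 1)
    (hlam : ∀ i, 2 ≤ i → i ≤ n →
      lam i = ∑' ℓ : ℕ, ((γ : ℝ) ^ ((i - 1) * β (ℓ + 1)))⁻¹) :
    ∑ i ∈ Finset.Icc 1 n, lam i < ((γ : ℝ) - 1) / ((γ : ℝ) - 2) := by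
  have hg4 : (4 : ℝ) ≤ (γ : ℝ) := by exact_mod_cast hγ
  set g : ℝ := (γ : ℝ) with hg
  have hg0 : 0 < g := by linarith
  have hg1 : 1 < g := by linarith
  have hinv0 : 0 ≤ g⁻¹ := by positivity
  have hinv1 : g⁻¹ < 1 := inv_lt_one_of_one_lt₀ hg1
  have hsumgeo : Summable fun ℓ : ℕ => g⁻¹ ^ ℓ := summable_geometric_of_lt_one hinv0 hinv1
  have htgeo : ∑' ℓ : ℕ, g⁻¹ ^ ℓ = (1 - g⁻¹)⁻¹ := tsum_geometric_of_lt_one hinv0 hinv1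
  -- exponent lower bound
  have hβge : ∀ ℓ : ℕ, ℓ + 1 ≤ β (ℓ + 1) := by
    intro ℓ
    rw [hβ]
    calc ℓ + 1 = ∑ _k ∈ Finset.range (ℓ + 1), 1 := by simp
      _ ≤ ∑ k ∈ Finset.range (ℓ + 1), n ^ k :=
        Finset.sum_le_sum fun k _ => Nat.one_le_pow _ _ (by omega)
  -- key bound on each lam i, 2 ≤ i ≤ n
  have key : ∀ i, 2 ≤ i → i ≤ n → lam i ≤ (1 - g⁻¹)⁻¹ * g⁻¹ ^ (i - 1) := by
    intro i h2 hin
    rw [hlam i h2 hin]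
    have hexp : ∀ ℓ : ℕ, (i - 1) + ℓ ≤ (i - 1) * β (ℓ + 1) := by
      intro ℓ
      have h1 : 1 ≤ i - 1 := by omega
      calc (i - 1) + ℓ ≤ (i - 1) * (ℓ + 1) := by
            have : ℓ = 1 * ℓ := (one_mul ℓ).symm
            calc (i - 1) + ℓ = (i - 1) + 1 * ℓ := by rw [one_mul]
              _ ≤ (i - 1) + (i - 1) * ℓ := by
                  exact Nat.add_le_add_left (Nat.mul_le_mul_right ℓ h1) _
              _ = (i - 1) * (ℓ + 1) := by ring
        _ ≤ (i - 1) * β (ℓ + 1) := Nat.mul_le_mul_left _ (hβge ℓ)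
    have hterm : ∀ ℓ : ℕ, ((g : ℝ) ^ ((i - 1) * β (ℓ + 1)))⁻¹ ≤ g⁻¹ ^ (i - 1) * g⁻¹ ^ ℓ := by
      intro ℓ
      rw [← pow_add, ← inv_pow]
      exact pow_le_pow_of_le_one hinv0 hinv1.le (hexp ℓ)
    have hnn : ∀ ℓ : ℕ, 0 ≤ ((g : ℝ) ^ ((i - 1) * β (ℓ + 1)))⁻¹ := fun ℓ => by positivity
    have hsum2 : Summable fun ℓ : ℕ => g⁻¹ ^ (i - 1) * g⁻¹ ^ ℓ := hsumgeo.mul_left _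
    calc (∑' ℓ : ℕ, ((g : ℝ) ^ ((i - 1) * β (ℓ + 1)))⁻¹)
        ≤ ∑' ℓ : ℕ, g⁻¹ ^ (i - 1) * g⁻¹ ^ ℓ :=
          Summable.tsum_le_tsum hterm (Summable.of_nonneg_of_le hnn hterm hsum2) hsum2
      _ = g⁻¹ ^ (i - 1) * (1 - g⁻¹)⁻¹ := by rw [tsum_mul_left, htgeo]
      _ = (1 - g⁻¹)⁻¹ * g⁻¹ ^ (i - 1) := by ring
  -- split off i = 1
  have hsplit : Finset.Icc 1 n = insert 1 (Finset.Icc 2 n) := by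
    ext x
    simp only [Finset.mem_Icc, Finset.mem_insert]
    omega
  have hnot : (1 : ℕ) ∉ Finset.Icc 2 n := by simp
  rw [hsplit, Finset.sum_insert hnot, hlam1]
  -- bound the tail sum
  have htail : ∑ i ∈ Finset.Icc 2 n, lam i
      ≤ (1 - g⁻¹)⁻¹ * ∑ i ∈ Finset.Icc 2 n, g⁻¹ ^ (i - 1) := by
    rw [Finset.mul_sum]
    exact Finset.sum_le_sum fun i hi => by
      rw [Finset.mem_Icc] at hi
      exact key i hi.1 hi.2
  have hIcc : Finset.Icc 2 n = Finset.Ico 2 (n + 1) := by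
    ext x; simp [Finset.mem_Icc, Finset.mem_Ico]
  have hgeosum : ∑ i ∈ Finset.Icc 2 n, g⁻¹ ^ (i - 1) ≤ g⁻¹ * (1 - g⁻¹)⁻¹ := by
    rw [hIcc, Finset.sum_Ico_eq_sum_range]
    have : ∀ j ∈ Finset.range (n + 1 - 2), g⁻¹ ^ (2 + j - 1) = g⁻¹ * g⁻¹ ^ j := by
      intro j _
      have : 2 + j - 1 = j + 1 := by omega
      rw [this, pow_succ]; ring
    rw [Finset.sum_congr rfl this, ← Finset.mul_sum]
    have hle : ∑ j ∈ Finset.range (n + 1 - 2), g⁻¹ ^ j ≤ (1 - g⁻¹)⁻¹ := by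
      rw [← htgeo]
      exact Summable.sum_le_tsum _ (fun j _ => by positivity) hsumgeo
    exact mul_le_mul_of_nonneg_left hle hinv0
  have h1g : 0 < 1 - g⁻¹ := by linarith
  have hbound : ∑ i ∈ Finset.Icc 2 n, lam i ≤ (1 - g⁻¹)⁻¹ * (g⁻¹ * (1 - g⁻¹)⁻¹) :=
    htail.trans (mul_le_mul_of_nonneg_left hgeosum (by positivity))
  have hfin : 1 + (1 - g⁻¹)⁻¹ * (g⁻¹ * (1 - g⁻¹)⁻¹) < (g - 1) / (g - 2) := by
    have hg2 : 0 < g - 2 := by linarith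
    have hgne : g ≠ 0 := ne_of_gt hg0
    have hne1 : (1 : ℝ) - g⁻¹ ≠ 0 := ne_of_gt h1g
    have hgm1 : (0 : ℝ) < g - 1 := by linarith
    have e1 : 1 + (1 - g⁻¹)⁻¹ * (g⁻¹ * (1 - g⁻¹)⁻¹) = ((g - 1) ^ 2 + g) / (g - 1) ^ 2 := by
      field_simp
    rw [e1, div_lt_div_iff₀ (by positivity) hg2]
    nlinarith [hg4]
  linarith
end

section
/- Let (θ_p)_{p∈P} be a finite family of ν-Lipschitz functions ℝ → ℝ with pairwise disjoint supports, and let (c_p)_{p∈P} be real coefficients with |c_p| ≤ E for all p. Then the function φ(x) = Σ_{p∈P} c_p θ_p(x) is (νE)-Lipschitz continuous, provided each θ_p takes values in [0,1]. -/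
private lemma disjoint_bumps_key {P : Type*} [Fintype P] (ν E : NNReal)
    (θ : P → ℝ → ℝ) (c : P → ℝ)
    (hlip : ∀ p, LipschitzWith ν (θ p))
    (hdisj : Pairwise fun p q => Disjoint (tsupport (θ p)) (tsupport (θ q)))
    (hc : ∀ p, |c p| ≤ E) (x y : ℝ) (hxy : x ≤ y) :
    |(∑ p, c p * θ p x) - ∑ p, c p * θ p y| ≤ (ν : ℝ) * E * (y - x) := by
  have huniq : ∀ z p q, θ p z ≠ 0 → θ q z ≠ 0 → p = q := by
    intro z p q hp hq
    by_contra h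
    exact Set.disjoint_left.mp (hdisj h) (subset_tsupport _ hp) (subset_tsupport _ hq)
  have hsum : ∀ z p, θ p z ≠ 0 → (∑ q, c q * θ q z) = c p * θ p z := by
    intro z p hp
    refine Finset.sum_eq_single p (fun q _ hq => ?_) (fun h => absurd (Finset.mem_univ p) h)
    have : θ q z = 0 := by
      by_contra hq'
      exact hq (huniq z q p hq' hp)
    simp [this]
  have hsum0 : ∀ z, (∀ p, θ p z = 0) → (∑ q, c q * θ q z) = 0 := by
    intro z hz; simp [hz]
  have hb : ∀ p a b, θ p b = 0 → |c p * θ p a| ≤ (ν : ℝ) * E * |a - b| := by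
    intro p a b hb0
    have h1 : |θ p a - θ p b| ≤ (ν : ℝ) * |a - b| := by
      have := (hlip p).dist_le_mul a b
      rwa [Real.dist_eq, Real.dist_eq] at this
    rw [hb0, sub_zero] at h1
    rw [abs_mul]
    calc |c p| * |θ p a| ≤ E * ((ν : ℝ) * |a - b|) :=
          mul_le_mul (hc p) h1 (abs_nonneg _) E.coe_nonneg
      _ = (ν : ℝ) * E * |a - b| := by ring
  by_cases hx : ∃ p, θ p x ≠ 0
  · obtain ⟨p, hp⟩ := hx
    by_cases hy : ∃ q, θ q y ≠ 0
    · obtain ⟨q, hq⟩ := hy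
      rw [hsum x p hp, hsum y q hq]
      by_cases hpq : p = q
      · subst hpq
        have h1 : |θ p x - θ p y| ≤ (ν : ℝ) * |x - y| := by
          have := (hlip p).dist_le_mul x y
          rwa [Real.dist_eq, Real.dist_eq] at this
        rw [show |x - y| = y - x by rw [abs_sub_comm]; exact abs_of_nonneg (by linarith)] at h1
        calc |c p * θ p x - c p * θ p y| = |c p| * |θ p x - θ p y| := by
              rw [← abs_mul, mul_sub]
          _ ≤ E * ((ν : ℝ) * (y - x)) :=
              mul_le_mul (hc p) h1 (abs_nonneg _) E.coe_nonneg
          _ = (ν : ℝ) * E * (y - x) := by ring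
      · -- p ≠ q : find z ∈ [x,y] where both vanish
        set K : Set ℝ := Set.Icc x y ∩ tsupport (θ p) with hK
        have hKc : IsCompact K := isCompact_Icc.inter_right (isClosed_tsupport _)
        have hxK : x ∈ K := ⟨⟨le_refl x, hxy⟩, subset_tsupport _ hp⟩
        set z : ℝ := sSup K with hz
        have hzK : z ∈ K := hKc.sSup_mem ⟨x, hxK⟩
        have hxz : x ≤ z := hzK.1.1
        have hzy : z ≤ y := hzK.1.2
        have hyq : y ∈ tsupport (θ q) := subset_tsupport _ hq
        have hzyne : z ≠ y := by
          intro h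
          exact Set.disjoint_left.mp (hdisj hpq) (h ▸ hzK.2) hyq
        have hzlt : z < y := lt_of_le_of_ne hzy hzyne
        have hqz : θ q z = 0 := by
          by_contra h
          exact Set.disjoint_left.mp (hdisj hpq) hzK.2 (subset_tsupport _ h)
        have hpz : θ p z = 0 := by
          have hsub : Set.Ioc z y ⊆ θ p ⁻¹' {0} := by
            intro t ht
            have htK : t ∉ K := by
              intro htK
              exact absurd (le_csSup hKc.bddAbove htK) (not_le.mpr ht.1)
            have : t ∉ tsupport (θ p) := fun h =>
              htK ⟨⟨le_trans hxz ht.1.le, ht.2⟩, h⟩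
            exact image_eq_zero_of_notMem_tsupport this
          have hcl : Set.Icc z y ⊆ θ p ⁻¹' {0} := by
            rw [← closure_Ioc hzyne]
            exact closure_minimal hsub (isClosed_singleton.preimage (hlip p).continuous)
          exact hcl ⟨le_refl z, hzy⟩
        have h1 : |c p * θ p x| ≤ (ν : ℝ) * E * (z - x) := by
          have := hb p x z hpz
          rwa [abs_eq_neg_self.mpr (by linarith : x - z ≤ 0), neg_sub] at this
        have h2 : |c q * θ q y| ≤ (ν : ℝ) * E * (y - z) := by
          have := hb q y z hqz
          rwa [abs_eq_self.mpr (by linarith : (0:ℝ) ≤ y - z)] at this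
        calc |c p * θ p x - c q * θ q y| ≤ |c p * θ p x| + |c q * θ q y| :=
              abs_sub _ _
          _ ≤ (ν : ℝ) * E * (z - x) + (ν : ℝ) * E * (y - z) := add_le_add h1 h2
          _ = (ν : ℝ) * E * (y - x) := by ring
    · push_neg at hy
      rw [hsum x p hp, hsum0 y hy, sub_zero]
      have := hb p x y (hy p)
      rwa [abs_eq_neg_self.mpr (by linarith : x - y ≤ 0), neg_sub] at this
  · push_neg at hx
    rw [hsum0 x hx]
    by_cases hy : ∃ q, θ q y ≠ 0
    · obtain ⟨q, hq⟩ := hy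
      rw [hsum y q hq, zero_sub, abs_neg]
      have := hb q y x (hx q)
      rwa [abs_eq_self.mpr (by linarith : (0:ℝ) ≤ y - x)] at this
    · push_neg at hy
      rw [hsum0 y hy, sub_zero, abs_zero]
      exact mul_nonneg (by positivity) (by linarith)

/-- A finite linear combination `φ = ∑ c_p θ_p` of `ν`-Lipschitz functions
with values in `[0,1]` and pairwise disjoint supports, with `|c_p| ≤ E`,
is `(ν·E)`-Lipschitz. -/
theorem disjoint_bumps_lipschitz {P : Type*} [Fintype P] (ν E : NNReal)
    (θ : P → ℝ → ℝ) (c : P → ℝ)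
    (hlip : ∀ p, LipschitzWith ν (θ p))
    (hrange : ∀ p x, θ p x ∈ Set.Icc (0 : ℝ) 1)
    (hdisj : Pairwise fun p q => Disjoint (tsupport (θ p)) (tsupport (θ q)))
    (hc : ∀ p, |c p| ≤ E) :
    LipschitzWith (ν * E) (fun x => ∑ p, c p * θ p x) := by
  apply LipschitzWith.of_dist_le_mul
  intro x y
  rw [Real.dist_eq, Real.dist_eq, NNReal.coe_mul]
  rcases le_total x y with h | h
  · rw [abs_eq_neg_self.mpr (by linarith : x - y ≤ 0), neg_sub]
    exact disjoint_bumps_key ν E θ c hlip hdisj hc x y h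
  · rw [abs_eq_self.mpr (by linarith : (0:ℝ) ≤ x - y), abs_sub_comm]
    exact disjoint_bumps_key ν E θ c hlip hdisj hc y x h
end
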